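/- arXiv:2507.15240 — 6 statements merged into one kernel-verified Lean document; each statement's English description precedes it below -/
import Mathlib

section
/- For every fixed t ∈ ℝ, the zero-level sets of G_t and H_t coincide away from the line a = t: {(a,s) ∈ ℝ² : G_t(a,s) = 0 and a ≠ t} = {(a,s) ∈ ℝ² : H_t(a,s) = 0 and a ≠ t}. -/
/-- For fixed `t`, the zero-level sets of `G_t(a,s) = s − 𝟙{a>t}` and
`H_t(a,s) = s + [s+a−1−t]₊ − [s+a−t]₊` coincide away from the line `a = t`. -/
theorem stmt_2 (t : ℝ) :
    {p : ℝ × ℝ | p.2 - (if p.1 > t then (1 : ℝ) else 0) = 0 ∧ p.1 ≠ t} =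
    {p : ℝ × ℝ |
      p.2 + max (p.2 + p.1 - 1 - t) 0 - max (p.2 + p.1 - t) 0 = 0 ∧ p.1 ≠ t} := by
  ext ⟨a, s⟩
  simp only [Set.mem_setOf_eq]
  constructor
  · rintro ⟨h, ha⟩
    refine ⟨?_, ha⟩
    by_cases hat : a > t
    · rw [if_pos hat] at h
      have hs : s = 1 := by linarith
      rw [hs, max_eq_left (by linarith), max_eq_left (by linarith)]
      ring
    · rw [if_neg hat] at h
      have hs : s = 0 := by linarith
      have hat' : a < t := lt_of_le_of_ne (not_lt.mp hat) ha
      rw [hs, max_eq_right (by linarith), max_eq_right (by linarith)]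
      ring
  · rintro ⟨h, ha⟩
    refine ⟨?_, ha⟩
    rcases le_or_gt (s + a - t) 0 with hu | hu
    · rw [max_eq_right (by linarith), max_eq_right hu] at h
      have hs : s = 0 := by linarith
      have hat : ¬ a > t := by
        intro hgt
        have : s + a - t > 0 := by linarith
        linarith
      rw [if_neg hat]; linarith
    · rcases le_or_gt (s + a - t) 1 with hu1 | hu1
      · rw [max_eq_right (by linarith), max_eq_left (by linarith)] at h
        exact absurd (by linarith : a = t) ha
      · rw [max_eq_left (by linarith), max_eq_left (by linarith)] at h
        have hs : s = 1 := by linarith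
        have hat : a > t := by linarith
        rw [if_pos hat]; linarith
end

section
/- If a triple (θ, s, t) is feasible for the indicator-relaxed problem IND, then the rounded triple (θ, r(θ,t), t) is also feasible for IND, and moreover φ_r(r(θ,t)) ≥ φ_r(s). -/
open Finset

/-- The indicator `𝟙{a > t}` as a real number. -/
noncomputable def indi (a t : ℝ) : ℝ := if a > t then 1 else 0

/-- `H_t(a,s) = s + [s+a−1−t]₊ − [s+a−t]₊`. -/
noncomputable def hng (t a s : ℝ) : ℝ := s + max (s + a - 1 - t) 0 - max (s + a - t) 0

/-- The predicted label vector `r(θ,t)_i = 𝟙{F θ i > t}`. -/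
noncomputable def rvec {Θ I : Type*} (F : Θ → I → ℝ) (θ : Θ) (t : ℝ) (i : I) : ℝ :=
  indi (F θ i) t

/-- `(θ,t)` is non-singular if `F θ i ≠ t` for all `i`. -/
def NonSingular {Θ I : Type*} (F : Θ → I → ℝ) (θ : Θ) (t : ℝ) : Prop := ∀ i, F θ i ≠ t

/-- The recallFn `φ_r(s) = (Σ_P s)/N₊`. -/
noncomputable def recallFn {I : Type*} (P : Finset I) (s : I → ℝ) : ℝ :=
  (∑ i ∈ P, s i) / (P.card : ℝ)

/-- `(θ,t)` is feasible for FPOR: `t ∈ [0,1]` and `Σ_P r(θ,t) ≥ α · Σ_I r(θ,t)`. -/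
def FPORFeasible {Θ I : Type*} [Fintype I] (P : Finset I) (F : Θ → I → ℝ) (α : ℝ)
    (θ : Θ) (t : ℝ) : Prop :=
  t ∈ Set.Icc (0 : ℝ) 1 ∧ ∑ i ∈ P, rvec F θ t i ≥ α * ∑ i, rvec F θ t i

/-- `(θ,s,t)` is feasible for the indicator-relaxed problem IND. -/
def INDFeasible {Θ I : Type*} [Fintype I] (P N : Finset I) (F : Θ → I → ℝ) (α : ℝ)
    (θ : Θ) (s : I → ℝ) (t : ℝ) : Prop :=
  (∀ i, s i ∈ Set.Icc (0 : ℝ) 1) ∧ t ∈ Set.Icc (0 : ℝ) 1 ∧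
  (∑ i ∈ P, s i ≥ α * ∑ i, s i) ∧
  (∀ i ∈ P, s i ≤ indi (F θ i) t) ∧ (∀ i ∈ N, indi (F θ i) t ≤ s i)

/-- `(θ,s,t)` is feasible for the hinge-relaxed problem HNG. -/
def HNGFeasible {Θ I : Type*} [Fintype I] (P N : Finset I) (F : Θ → I → ℝ) (α : ℝ)
    (θ : Θ) (s : I → ℝ) (t : ℝ) : Prop :=
  (∀ i, s i ∈ Set.Icc (0 : ℝ) 1) ∧ t ∈ Set.Icc (0 : ℝ) 1 ∧
  (∑ i ∈ P, s i ≥ α * ∑ i, s i) ∧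
  (∀ i ∈ P, hng t (F θ i) (s i) ≤ 0) ∧ (∀ i ∈ N, 0 ≤ hng t (F θ i) (s i))

/-- If `(θ,s,t)` is feasible for IND, then the rounded triple `(θ, r(θ,t), t)` is
also feasible for IND, and `φ_r(r(θ,t)) ≥ φ_r(s)`. -/
theorem stmt_9 {Θ I : Type*} [Fintype I] [DecidableEq I] (P N : Finset I)
    (hPN : P ∪ N = Finset.univ) (hdisj : Disjoint P N) (hP : P.Nonempty)
    (F : Θ → I → ℝ) (hF : ∀ θ i, F θ i ∈ Set.Icc (0 : ℝ) 1)
    (α : ℝ) (hα : α ∈ Set.Icc (0 : ℝ) 1)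
    (θ : Θ) (s : I → ℝ) (t : ℝ)
    (hfeas : INDFeasible P N F α θ s t) :
    INDFeasible P N F α θ (rvec F θ t) t ∧ recallFn P s ≤ recallFn P (rvec F θ t) := by

  obtain ⟨hs01, ht, hrec, hPle, hNle⟩ := hfeas
  have hsplit : ∀ g : I → ℝ, ∑ i, g i = ∑ i ∈ P, g i + ∑ i ∈ N, g i := by
    intro g
    rw [← Finset.sum_union hdisj, hPN]
  have hPsum : ∑ i ∈ P, s i ≤ ∑ i ∈ P, rvec F θ t i :=
    Finset.sum_le_sum fun i hi => hPle i hi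
  have hNsum : ∑ i ∈ N, rvec F θ t i ≤ ∑ i ∈ N, s i :=
    Finset.sum_le_sum fun i hi => hNle i hi
  have hkey : ∑ i ∈ P, rvec F θ t i ≥ α * ∑ i, rvec F θ t i := by
    rw [hsplit]
    have h1 : (1 - α) * ∑ i ∈ P, s i ≤ (1 - α) * ∑ i ∈ P, rvec F θ t i :=
      mul_le_mul_of_nonneg_left hPsum (by linarith [hα.2])
    have h2 : α * ∑ i ∈ N, rvec F θ t i ≤ α * ∑ i ∈ N, s i :=
      mul_le_mul_of_nonneg_left hNsum hα.1
    have h3 := hrec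
    rw [hsplit] at h3
    nlinarith
  refine ⟨⟨fun i => ?_, ht, hkey, fun i _ => le_refl _, fun i _ => le_refl _⟩, ?_⟩
  · unfold rvec indi
    split <;> simp
  · unfold recallFn
    have hc : (0:ℝ) < (P.card : ℝ) := by exact_mod_cast Finset.card_pos.mpr hP
    exact div_le_div_of_nonneg_right hPsum hc.le
end

section
/- If a non-singular pair (θ, t) is feasible for FPOR, then the triple (θ, r(θ,t), t) is feasible for the hinge-relaxed problem HNG. -/
open Finset

/-- If a non-singular pair `(θ,t)` is feasible for FPOR, then `(θ, r(θ,t), t)` is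
feasible for the hinge-relaxed problem HNG. -/
theorem stmt_10 {Θ I : Type*} [Fintype I] [DecidableEq I] (P N : Finset I)
    (hPN : P ∪ N = Finset.univ) (hdisj : Disjoint P N) (hP : P.Nonempty)
    (F : Θ → I → ℝ) (hF : ∀ θ i, F θ i ∈ Set.Icc (0 : ℝ) 1)
    (α : ℝ) (hα : α ∈ Set.Icc (0 : ℝ) 1)
    (θ : Θ) (t : ℝ)
    (hns : NonSingular F θ t) (hfeas : FPORFeasible P F α θ t) :
    HNGFeasible P N F α θ (rvec F θ t) t := by
  obtain ⟨ht, hsum⟩ := hfeas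
  have hzero : ∀ i, hng t (F θ i) (rvec F θ t i) = 0 := by
    intro i
    have ha := hF θ i
    have hne := hns i
    unfold hng rvec indi
    by_cases h : F θ i > t
    · simp only [h, if_true]
      rw [max_eq_left, max_eq_left] <;> simp [Set.mem_Icc] at ha ht ⊢ <;> nlinarith
    · have hlt : F θ i < t := lt_of_le_of_ne (not_lt.mp h) hne
      simp only [h, if_false]
      rw [max_eq_right, max_eq_right] <;> simp [Set.mem_Icc] at ha ht ⊢ <;> nlinarith
  refine ⟨?_, ht, hsum, fun i _ => le_of_eq (hzero i), fun i _ => ge_of_eq (hzero i)⟩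
  intro i
  unfold rvec indi
  by_cases h : F θ i > t <;> simp [h]
end

section
/- If a triple (θ, s, t) with (θ, t) non-singular is feasible for the hinge-relaxed problem HNG, then the pair (θ, t) is feasible for FPOR. -/
open Finset

lemma hng_le_indi {t a s : ℝ} (h : hng t a s ≤ 0) (hs0 : 0 ≤ s) (hs1 : s ≤ 1)
    (hne : a ≠ t) : s ≤ indi a t := by
  unfold hng at h
  unfold indi
  rcases lt_or_gt_of_ne hne with hlt | hgt
  · simp only [if_neg (not_lt.mpr hlt.le)]
    rcases max_cases (s + a - 1 - t) 0 with ⟨h1, h2⟩ | ⟨h1, h2⟩ <;>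
      rcases max_cases (s + a - t) 0 with ⟨h3, h4⟩ | ⟨h3, h4⟩ <;> linarith
  · simp only [if_pos hgt]
    exact hs1

lemma indi_le_hng {t a s : ℝ} (h : 0 ≤ hng t a s) (hs0 : 0 ≤ s) (hs1 : s ≤ 1)
    (hne : a ≠ t) : indi a t ≤ s := by
  unfold hng at h
  unfold indi
  rcases lt_or_gt_of_ne hne with hlt | hgt
  · simp only [if_neg (not_lt.mpr hlt.le)]
    exact hs0
  · simp only [if_pos hgt]
    rcases max_cases (s + a - 1 - t) 0 with ⟨h1, h2⟩ | ⟨h1, h2⟩ <;>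
      rcases max_cases (s + a - t) 0 with ⟨h3, h4⟩ | ⟨h3, h4⟩ <;> linarith

/-- If `(θ,s,t)` with non-singular `(θ,t)` is feasible for the hinge-relaxed problem
HNG, then `(θ,t)` is feasible for FPOR. -/
theorem stmt_11 {Θ I : Type*} [Fintype I] [DecidableEq I] (P N : Finset I)
    (hPN : P ∪ N = Finset.univ) (hdisj : Disjoint P N) (hP : P.Nonempty)
    (F : Θ → I → ℝ) (hF : ∀ θ i, F θ i ∈ Set.Icc (0 : ℝ) 1)
    (α : ℝ) (hα : α ∈ Set.Icc (0 : ℝ) 1)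
    (θ : Θ) (s : I → ℝ) (t : ℝ)
    (hns : NonSingular F θ t) (hfeas : HNGFeasible P N F α θ s t) :
    FPORFeasible P F α θ t := by
  obtain ⟨hs, ht, hsum, hPh, hNh⟩ := hfeas
  refine ⟨ht, ?_⟩
  have hPle : ∀ i ∈ P, s i ≤ rvec F θ t i := fun i hi =>
    hng_le_indi (hPh i hi) (hs i).1 (hs i).2 (hns i)
  have hNle : ∀ i ∈ N, rvec F θ t i ≤ s i := fun i hi =>
    indi_le_hng (hNh i hi) (hs i).1 (hs i).2 (hns i)
  have hsplit : ∀ f : I → ℝ, ∑ i, f i = ∑ i ∈ P, f i + ∑ i ∈ N, f i := by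
    intro f
    rw [← Finset.sum_union hdisj, hPN]
  have h1 : ∑ i ∈ P, s i ≤ ∑ i ∈ P, rvec F θ t i := Finset.sum_le_sum hPle
  have h2 : ∑ i ∈ N, rvec F θ t i ≤ ∑ i ∈ N, s i := Finset.sum_le_sum hNle
  have h3 : (0:ℝ) ≤ ∑ i ∈ N, rvec F θ t i := by
    apply Finset.sum_nonneg
    intro i _
    unfold rvec indi
    split <;> norm_num
  rw [hsplit s] at hsum
  rw [hsplit (rvec F θ t)]
  nlinarith [hα.1, hα.2]
end

section
/- A non-singular pair (θ*, t*) is a global solution of FPOR restricted to non-singular points (i.e., (θ*, t*) is FPOR-feasible and φ_r(r(θ*,t*)) ≥ φ_r(r(θ,t)) for every non-singular FPOR-feasible pair (θ, t)) if and only if there exists s* ∈ [0,1]^I such that (θ*, s*, t*) is a global solution of HNG restricted to non-singular points (i.e., (θ*, s*, t*) is HNG-feasible and φ_r(s*) ≥ φ_r(s) for every HNG-feasible triple (θ, s, t) with (θ, t) non-singular). -/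
open Finset

lemma indi_mem (a t : ℝ) : indi a t ∈ Set.Icc (0:ℝ) 1 := by
  unfold indi; split <;> norm_num

lemma hng_le_iff {a t s : ℝ} (hs : s ∈ Set.Icc (0:ℝ) 1) (h : a ≠ t) :
    hng t a s ≤ 0 ↔ s ≤ indi a t := by
  obtain ⟨hs0, hs1⟩ := hs
  unfold hng indi
  rcases lt_or_gt_of_ne h with hlt | hgt
  · rw [if_neg (not_lt.mpr hlt.le)]
    rw [max_eq_right (by linarith : s + a - 1 - t ≤ 0)]
    rcases le_or_gt (s + a - t) 0 with h1 | h1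
    · rw [max_eq_right h1]; constructor <;> intro <;> linarith
    · rw [max_eq_left h1.le]; constructor <;> intro <;> linarith
  · rw [if_pos hgt]
    rw [max_eq_left (by linarith : 0 ≤ s + a - t)]
    rcases le_or_gt (s + a - 1 - t) 0 with h1 | h1
    · rw [max_eq_right h1]; constructor <;> intro <;> linarith
    · rw [max_eq_left h1.le]; constructor <;> intro <;> linarith

lemma hng_ge_iff {a t s : ℝ} (hs : s ∈ Set.Icc (0:ℝ) 1) (h : a ≠ t) :
    0 ≤ hng t a s ↔ indi a t ≤ s := by
  obtain ⟨hs0, hs1⟩ := hs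
  unfold hng indi
  rcases lt_or_gt_of_ne h with hlt | hgt
  · rw [if_neg (not_lt.mpr hlt.le)]
    rw [max_eq_right (by linarith : s + a - 1 - t ≤ 0)]
    rcases le_or_gt (s + a - t) 0 with h1 | h1
    · rw [max_eq_right h1]; constructor <;> intro <;> linarith
    · rw [max_eq_left h1.le]; constructor <;> intro <;> linarith
  · rw [if_pos hgt]
    rw [max_eq_left (by linarith : 0 ≤ s + a - t)]
    rcases le_or_gt (s + a - 1 - t) 0 with h1 | h1
    · rw [max_eq_right h1]; constructor <;> intro <;> linarith
    · rw [max_eq_left h1.le]; constructor <;> intro <;> linarith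

lemma ind_iff_hng {Θ I : Type*} [Fintype I] (P N : Finset I) (F : Θ → I → ℝ) (α : ℝ)
    (θ : Θ) (s : I → ℝ) (t : ℝ) (hns : NonSingular F θ t) :
    INDFeasible P N F α θ s t ↔ HNGFeasible P N F α θ s t := by
  unfold INDFeasible HNGFeasible
  constructor
  · rintro ⟨h1, h2, h3, h4, h5⟩
    exact ⟨h1, h2, h3, fun i hi => (hng_le_iff (h1 i) (hns i)).mpr (h4 i hi),
      fun i hi => (hng_ge_iff (h1 i) (hns i)).mpr (h5 i hi)⟩
  · rintro ⟨h1, h2, h3, h4, h5⟩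
    exact ⟨h1, h2, h3, fun i hi => (hng_le_iff (h1 i) (hns i)).mp (h4 i hi),
      fun i hi => (hng_ge_iff (h1 i) (hns i)).mp (h5 i hi)⟩

lemma sum_split {I : Type*} [Fintype I] [DecidableEq I] (P N : Finset I)
    (hPN : P ∪ N = Finset.univ) (hdisj : Disjoint P N) (f : I → ℝ) :
    ∑ i, f i = ∑ i ∈ P, f i + ∑ i ∈ N, f i := by
  rw [← Finset.sum_union hdisj, hPN]

lemma ind_to_fpor {Θ I : Type*} [Fintype I] [DecidableEq I] (P N : Finset I)
    (hPN : P ∪ N = Finset.univ) (hdisj : Disjoint P N) (F : Θ → I → ℝ) (α : ℝ)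
    (hα : α ∈ Set.Icc (0 : ℝ) 1) (θ : Θ) (s : I → ℝ) (t : ℝ)
    (h : INDFeasible P N F α θ s t) :
    FPORFeasible P F α θ t ∧ ∑ i ∈ P, s i ≤ ∑ i ∈ P, rvec F θ t i := by
  obtain ⟨h1, h2, h3, h4, h5⟩ := h
  obtain ⟨hα0, hα1⟩ := hα
  have hPle : ∑ i ∈ P, s i ≤ ∑ i ∈ P, rvec F θ t i :=
    Finset.sum_le_sum (fun i hi => h4 i hi)
  have hNle : ∑ i ∈ N, rvec F θ t i ≤ ∑ i ∈ N, s i :=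
    Finset.sum_le_sum (fun i hi => h5 i hi)
  refine ⟨⟨h2, ?_⟩, hPle⟩
  rw [sum_split P N hPN hdisj (rvec F θ t)]
  rw [sum_split P N hPN hdisj s] at h3
  nlinarith [hPle, hNle, h3]

lemma rvec_ind {Θ I : Type*} [Fintype I] [DecidableEq I] (P N : Finset I)
    (F : Θ → I → ℝ) (α : ℝ) (θ : Θ) (t : ℝ) (h : FPORFeasible P F α θ t) :
    INDFeasible P N F α θ (rvec F θ t) t :=
  ⟨fun i => indi_mem _ _, h.1, h.2, fun i _ => le_refl _, fun i _ => le_refl _⟩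

lemma recall_mono {I : Type*} (P : Finset I) {s s' : I → ℝ}
    (h : ∑ i ∈ P, s i ≤ ∑ i ∈ P, s' i) : recallFn P s ≤ recallFn P s' := by
  unfold recallFn
  rcases eq_or_ne (P.card : ℝ) 0 with h0 | h0
  · simp [h0]
  · have hpos : (0:ℝ) < P.card := lt_of_le_of_ne (Nat.cast_nonneg _) (Ne.symm h0)
    exact (div_le_div_iff_of_pos_right hpos).mpr h

/-- A non-singular `(θ*, t*)` is a global solution of FPOR restricted to
non-singular points iff there exists `s*` such that `(θ*, s*, t*)` is a global
solution of HNG restricted to non-singular points. -/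
theorem stmt_12 {Θ I : Type*} [Fintype I] [DecidableEq I] (P N : Finset I)
    (hPN : P ∪ N = Finset.univ) (hdisj : Disjoint P N) (hP : P.Nonempty)
    (F : Θ → I → ℝ) (hF : ∀ θ i, F θ i ∈ Set.Icc (0 : ℝ) 1)
    (α : ℝ) (hα : α ∈ Set.Icc (0 : ℝ) 1)
    (θs : Θ) (ts : ℝ) (hns : NonSingular F θs ts) :
    (FPORFeasible P F α θs ts ∧
      ∀ θ t, NonSingular F θ t → FPORFeasible P F α θ t →
        recallFn P (rvec F θ t) ≤ recallFn P (rvec F θs ts))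
    ↔
    (∃ ss : I → ℝ, HNGFeasible P N F α θs ss ts ∧
      ∀ θ (s : I → ℝ) t, NonSingular F θ t → HNGFeasible P N F α θ s t →
        recallFn P s ≤ recallFn P ss) := by
  constructor
  · rintro ⟨hfeas, hopt⟩
    refine ⟨rvec F θs ts, ?_, ?_⟩
    · exact (ind_iff_hng P N F α θs _ ts hns).mp (rvec_ind P N F α θs ts hfeas)
    · intro θ s t hns' hhng
      have hind := (ind_iff_hng P N F α θ s t hns').mpr hhng
      obtain ⟨hf, hle⟩ := ind_to_fpor P N hPN hdisj F α hα θ s t hind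
      exact le_trans (recall_mono P hle) (hopt θ t hns' hf)
  · rintro ⟨ss, hfeas, hopt⟩
    have hind := (ind_iff_hng P N F α θs ss ts hns).mpr hfeas
    obtain ⟨hf, hle⟩ := ind_to_fpor P N hPN hdisj F α hα θs ss ts hind
    refine ⟨hf, ?_⟩
    intro θ t hns' hf'
    have hhng := (ind_iff_hng P N F α θ _ t hns').mp (rvec_ind P N F α θ t hf')
    exact le_trans (hopt θ (rvec F θ t) t hns' hhng) (recall_mono P hle)
end

section
/- Among points with non-singular (θ, t): (1) a triple (θ*, s*, t*) with (θ*, t*) non-singular is a global solution of EQH restricted to non-singular points if and only if it is a global solution of EQL restricted to non-singular points; (2) if (θ*, s*, t*) with (θ*, t*) non-singular is a global solution of EQH restricted to non-singular points, then (θ*, t*) is a global solution of FPOR restricted to non-singular points; (3) conversely, if a non-singular (θ*, t*) is a global solution of FPOR restricted to non-singular points, then (θ*, r(θ*,t*), t*) is a global solution of EQH restricted to non-singular points. Here a global solution restricted to non-singular points means a feasible point whose objective value is at least that of every feasible point whose (θ, t)-component is non-singular. -/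
open Finset

/-- `(θ,s,t)` is feasible for the equality-lifted problem EQL. -/
def EQLFeasible {Θ I : Type*} [Fintype I] (P : Finset I) (F : Θ → I → ℝ) (α : ℝ)
    (θ : Θ) (s : I → ℝ) (t : ℝ) : Prop :=
  (∀ i, s i ∈ Set.Icc (0 : ℝ) 1) ∧ t ∈ Set.Icc (0 : ℝ) 1 ∧
  (∑ i ∈ P, s i ≥ α * ∑ i, s i) ∧
  (∀ i, s i = indi (F θ i) t)

/-- `(θ,s,t)` is feasible for the hinge-equality problem EQH. -/
def EQHFeasible {Θ I : Type*} [Fintype I] (P : Finset I) (F : Θ → I → ℝ) (α : ℝ)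
    (θ : Θ) (s : I → ℝ) (t : ℝ) : Prop :=
  (∀ i, s i ∈ Set.Icc (0 : ℝ) 1) ∧ t ∈ Set.Icc (0 : ℝ) 1 ∧
  (∑ i ∈ P, s i ≥ α * ∑ i, s i) ∧
  (∀ i, hng t (F θ i) (s i) = 0)

lemma hng_eq_zero_iff (t a s : ℝ) (hs0 : 0 ≤ s) (hs1 : s ≤ 1) (hne : a ≠ t) :
    hng t a s = 0 ↔ s = indi a t := by
  unfold hng indi
  rcases lt_or_gt_of_ne hne with h | h
  · simp only [if_neg (not_lt.mpr h.le)]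
    constructor
    · intro hz
      rw [max_eq_right (by linarith : s + a - 1 - t ≤ 0)] at hz
      rcases le_or_gt (s + a - t) 0 with h2 | h2
      · rw [max_eq_right h2] at hz; linarith
      · rw [max_eq_left h2.le] at hz; linarith
    · intro hz; subst hz
      rw [max_eq_right (by linarith), max_eq_right (by linarith)]; ring
  · simp only [if_pos h]
    constructor
    · intro hz
      rw [max_eq_left (by linarith : (0:ℝ) ≤ s + a - t)] at hz
      rcases le_or_gt (s + a - 1 - t) 0 with h1 | h1
      · rw [max_eq_right h1] at hz; linarith
      · rw [max_eq_left h1.le] at hz; linarith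
    · intro hz; subst hz
      rw [max_eq_left (by linarith), max_eq_left (by linarith)]; ring

lemma eqh_iff_eql {Θ I : Type*} [Fintype I] (P : Finset I) (F : Θ → I → ℝ) (α : ℝ)
    (θ : Θ) (s : I → ℝ) (t : ℝ) (hns : NonSingular F θ t) :
    EQHFeasible P F α θ s t ↔ EQLFeasible P F α θ s t := by
  constructor
  · rintro ⟨h1, h2, h3, h4⟩
    exact ⟨h1, h2, h3, fun i =>
      (hng_eq_zero_iff t (F θ i) (s i) (h1 i).1 (h1 i).2 (hns i)).mp (h4 i)⟩
  · rintro ⟨h1, h2, h3, h4⟩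
    exact ⟨h1, h2, h3, fun i =>
      (hng_eq_zero_iff t (F θ i) (s i) (h1 i).1 (h1 i).2 (hns i)).mpr (h4 i)⟩

lemma eql_s_eq {Θ I : Type*} [Fintype I] (P : Finset I) (F : Θ → I → ℝ) (α : ℝ)
    (θ : Θ) (s : I → ℝ) (t : ℝ) (h : EQLFeasible P F α θ s t) : s = rvec F θ t :=
  funext fun i => h.2.2.2 i

lemma fpor_iff_eql {Θ I : Type*} [Fintype I] (P : Finset I) (F : Θ → I → ℝ) (α : ℝ)
    (θ : Θ) (t : ℝ) :
    FPORFeasible P F α θ t ↔ EQLFeasible P F α θ (rvec F θ t) t := by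
  constructor
  · rintro ⟨h1, h2⟩
    exact ⟨fun i => indi_mem _ _, h1, h2, fun i => rfl⟩
  · rintro ⟨h1, h2, h3, h4⟩
    exact ⟨h2, h3⟩

/-- Among points with non-singular `(θ,t)`:
(1) `(θ*,s*,t*)` is a global solution of EQH restricted to non-singular points iff
it is a global solution of EQL restricted to non-singular points;
(2) if `(θ*,s*,t*)` is a global solution of EQH restricted to non-singular points,
then `(θ*,t*)` is a global solution of FPOR restricted to non-singular points;
(3) conversely, if a non-singular `(θ*,t*)` is a global solution of FPOR restricted
to non-singular points, then `(θ*, r(θ*,t*), t*)` is a global solution of EQH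
restricted to non-singular points. -/
theorem stmt_13 {Θ I : Type*} [Fintype I] [DecidableEq I] (P N : Finset I)
    (hPN : P ∪ N = Finset.univ) (hdisj : Disjoint P N) (hP : P.Nonempty)
    (F : Θ → I → ℝ) (hF : ∀ θ i, F θ i ∈ Set.Icc (0 : ℝ) 1)
    (α : ℝ) (hα : α ∈ Set.Icc (0 : ℝ) 1) :
    (∀ (θs : Θ) (ss : I → ℝ) (ts : ℝ), NonSingular F θs ts →
      ((EQHFeasible P F α θs ss ts ∧
          ∀ θ (s : I → ℝ) t, NonSingular F θ t → EQHFeasible P F α θ s t →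
            recallFn P s ≤ recallFn P ss)
        ↔
       (EQLFeasible P F α θs ss ts ∧
          ∀ θ (s : I → ℝ) t, NonSingular F θ t → EQLFeasible P F α θ s t →
            recallFn P s ≤ recallFn P ss)))
    ∧
    (∀ (θs : Θ) (ss : I → ℝ) (ts : ℝ), NonSingular F θs ts →
      (EQHFeasible P F α θs ss ts ∧
        ∀ θ (s : I → ℝ) t, NonSingular F θ t → EQHFeasible P F α θ s t →
          recallFn P s ≤ recallFn P ss) →
      (FPORFeasible P F α θs ts ∧
        ∀ θ t, NonSingular F θ t → FPORFeasible P F α θ t →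
          recallFn P (rvec F θ t) ≤ recallFn P (rvec F θs ts)))
    ∧
    (∀ (θs : Θ) (ts : ℝ), NonSingular F θs ts →
      (FPORFeasible P F α θs ts ∧
        ∀ θ t, NonSingular F θ t → FPORFeasible P F α θ t →
          recallFn P (rvec F θ t) ≤ recallFn P (rvec F θs ts)) →
      (EQHFeasible P F α θs (rvec F θs ts) ts ∧
        ∀ θ (s : I → ℝ) t, NonSingular F θ t → EQHFeasible P F α θ s t →
          recallFn P s ≤ recallFn P (rvec F θs ts))) := by
  refine ⟨?_, ?_, ?_⟩
  · intro θs ss ts hns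
    constructor
    · rintro ⟨hfeas, hopt⟩
      exact ⟨(eqh_iff_eql P F α θs ss ts hns).mp hfeas,
        fun θ s t hn hf => hopt θ s t hn ((eqh_iff_eql P F α θ s t hn).mpr hf)⟩
    · rintro ⟨hfeas, hopt⟩
      exact ⟨(eqh_iff_eql P F α θs ss ts hns).mpr hfeas,
        fun θ s t hn hf => hopt θ s t hn ((eqh_iff_eql P F α θ s t hn).mp hf)⟩
  · rintro θs ss ts hns ⟨hfeas, hopt⟩
    have heql := (eqh_iff_eql P F α θs ss ts hns).mp hfeas
    have hseq := eql_s_eq P F α θs ss ts heql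
    have hfpor : FPORFeasible P F α θs ts := by
      rw [fpor_iff_eql]; rwa [hseq] at heql
    refine ⟨hfpor, fun θ t hn hf => ?_⟩
    rw [← hseq]
    exact hopt θ (rvec F θ t) t hn
      ((eqh_iff_eql P F α θ _ t hn).mpr ((fpor_iff_eql P F α θ t).mp hf))
  · rintro θs ts hns ⟨hfeas, hopt⟩
    refine ⟨(eqh_iff_eql P F α θs _ ts hns).mpr ((fpor_iff_eql P F α θs ts).mp hfeas),
      fun θ s t hn hf => ?_⟩
    have heql := (eqh_iff_eql P F α θ s t hn).mp hf
    rw [eql_s_eq P F α θ s t heql]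
    exact hopt θ t hn ((fpor_iff_eql P F α θ t).mpr (by rwa [← eql_s_eq P F α θ s t heql]))
end
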